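/- Let φ be an automorphism of a free group F, let G = F ⋊_φ ℤ with stable letter s = (1,1), and let x = (w, m) ∈ G be an element whose ℤ-coordinate m is nonzero. Then the normalizer in G of the cyclic subgroup ⟨x⟩ is equal to the centralizer of x in G. -/

import Mathlib

/-- In a free-by-cyclic group `F ⋊_φ ℤ`, the normalizer of the cyclic subgroup generated
by an element `(w, m)` with nonzero `ℤ`-coordinate equals its centralizer. -/
theorem normalizer_eq_centralizer_of_stable_exponent_ne_zero
    {α : Type*} (φ : MulAut (FreeGroup α)) (w : FreeGroup α) (m : ℤ) (hm : m ≠ 0) :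
    Subgroup.normalizer ((Subgroup.zpowers ((⟨w, Multiplicative.ofAdd m⟩ :
        FreeGroup α ⋊[zpowersHom (MulAut (FreeGroup α)) φ] Multiplicative ℤ))) : Set _)
      = Subgroup.centralizer {(⟨w, Multiplicative.ofAdd m⟩ :
          FreeGroup α ⋊[zpowersHom (MulAut (FreeGroup α)) φ] Multiplicative ℤ)} := by
  set x : FreeGroup α ⋊[zpowersHom (MulAut (FreeGroup α)) φ] Multiplicative ℤ :=
    ⟨w, Multiplicative.ofAdd m⟩ with hx
  apply le_antisymm
  · intro g hg
    rw [Subgroup.mem_normalizer_iff] at hg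
    obtain ⟨k, hk⟩ := (hg x).mp (Subgroup.mem_zpowers x)
    have hπ := congrArg SemidirectProduct.rightHom hk
    simp only [map_zpow, map_mul, map_inv] at hπ
    have hπ' : (SemidirectProduct.rightHom x) ^ k = SemidirectProduct.rightHom x := by
      rw [hπ, mul_comm, inv_mul_cancel_left]
    have hmx : SemidirectProduct.rightHom x = Multiplicative.ofAdd m := rfl
    rw [hmx] at hπ'
    have hkm : k * m = m := by
      have := congrArg Multiplicative.toAdd hπ'
      simpa [smul_eq_mul] using this
    have hk1 : k = 1 := by
      have h2 : (k - 1) * m = 0 := by ring_nf; omega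
      rcases mul_eq_zero.mp h2 with h | h
      · omega
      · exact absurd h hm
    rw [hk1] at hk
    have hk' : x = g * x * g⁻¹ := by simpa using hk
    rw [Subgroup.mem_centralizer_singleton_iff]
    exact mul_inv_eq_iff_eq_mul.mp hk'.symm
  · intro g hg
    rw [Subgroup.mem_centralizer_singleton_iff] at hg
    rw [Subgroup.mem_normalizer_iff]
    intro h
    have hc : Commute g x := hg
    have key : ∀ k : ℤ, g * x ^ k = x ^ k * g := fun k => (hc.zpow_right k).eq
    constructor
    · rintro ⟨k, rfl⟩
      refine ⟨k, ?_⟩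
      simp only []
      rw [key k, mul_inv_cancel_right]
    · rintro ⟨k, hkk⟩
      refine ⟨k, ?_⟩
      have h1 : h = g⁻¹ * x ^ k * g := by
        have hkk' : x ^ k = g * h * g⁻¹ := hkk
        rw [hkk']; group
      show x ^ k = h
      rw [h1, mul_assoc, ← key k, inv_mul_cancel_left]
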